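/- For every odd natural number k ≥ 3, the polynomial X^2 (X+1)^2 divides, in ℚ[X], the Faulhaber polynomial Q_k(X) = (1/(k+1)) · ∑_{j=0}^{k} C(k+1, j) · B'_j · X^{k+1-j}, whose value at every natural number n equals 1^k + 2^k + ... + n^k. -/

import Mathlib

open Polynomial

private theorem aux_sq_dvd (p : ℚ[X]) (a : ℚ) (h0 : p.eval a = 0)
    (h1 : p.derivative.eval a = 0) : (X - C a) ^ 2 ∣ p := by
  obtain ⟨q, hq⟩ := (dvd_iff_isRoot.mpr h0)
  have hd : p.derivative = q + (X - C a) * q.derivative := by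
    rw [hq]; simp [derivative_mul]
  have hqa : q.eval a = 0 := by
    have := congrArg (eval a) hd
    simpa [h1] using this.symm
  obtain ⟨r, hr⟩ := (dvd_iff_isRoot.mpr hqa)
  exact ⟨r, by rw [hq, hr]; ring⟩

private theorem aux_zero (p : ℚ[X]) (h : ∀ n : ℕ, p.eval (n : ℚ) = 0) : p = 0 := by
  apply p.eq_zero_of_infinite_isRoot
  apply Set.Infinite.mono (s := Set.range (Nat.cast : ℕ → ℚ))
  · rintro x ⟨n, rfl⟩; exact h n
  · exact Set.infinite_range_of_injective Nat.cast_injective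

/-- For every odd `k ≥ 3`, the polynomial `X^2 (X+1)^2` divides in `ℚ[X]` the Faulhaber
polynomial `Q_k(X) = (1/(k+1)) * ∑_{j=0}^{k} C(k+1,j) * B'_j * X^(k+1-j)`, whose value at
every natural number `n` equals `1^k + 2^k + ... + n^k`. -/
theorem sq_X_mul_sq_X_add_one_dvd_faulhaber (k : ℕ) (hk : 3 ≤ k) (hodd : Odd k)
    (Q : ℚ[X])
    (hQ : Q = Polynomial.C (1 / (k + 1 : ℚ)) *
      ∑ j ∈ Finset.range (k + 1),
        Polynomial.C ((Nat.choose (k + 1) j : ℚ) * bernoulli' j) * X ^ (k + 1 - j)) :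
    (X ^ 2 * (X + 1) ^ 2 ∣ Q) ∧
      ∀ n : ℕ, Q.eval (n : ℚ) = ∑ i ∈ Finset.Icc 1 n, (i : ℚ) ^ k := by
  have hval : ∀ n : ℕ, Q.eval (n : ℚ) = ∑ i ∈ Finset.Icc 1 n, (i : ℚ) ^ k := by
    intro n
    rw [← Finset.Ico_add_one_right_eq_Icc, sum_Ico_pow n k, hQ]
    simp only [eval_mul, eval_C, eval_finset_sum, eval_pow, eval_X, Finset.mul_sum]
    refine Finset.sum_congr rfl fun j _ => ?_
    have : ((k : ℚ) + 1) ≠ 0 := by positivity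
    field_simp
  refine ⟨?_, hval⟩
  have hk0 : k ≠ 0 := by omega
  -- the recurrence Q(x+1) = Q(x) + (x+1)^k as a function on ℚ
  have hrec : ∀ x : ℚ, Q.eval (x + 1) = Q.eval x + (x + 1) ^ k := by
    have hP : Q.comp (X + 1) - Q - (X + 1) ^ k = 0 := by
      apply aux_zero
      intro n
      have h1 := hval n
      have h2 := hval (n + 1)
      push_cast at h2
      simp only [eval_sub, eval_comp, eval_add, eval_X, eval_one, eval_pow]
      rw [h2, h1, ← Finset.Ico_add_one_right_eq_Icc, Finset.sum_Ico_succ_top (by omega),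
        Finset.Ico_add_one_right_eq_Icc]
      push_cast
      ring
    intro x
    have h := congrArg (eval x) hP
    simp only [eval_sub, eval_comp, eval_add, eval_X, eval_one, eval_pow, eval_zero] at h
    linarith [h]
  have hQ0 : Q.eval 0 = 0 := by simpa using hval 0
  have hQm1 : Q.eval (-1) = 0 := by
    have := hrec (-1)
    simp [zero_pow hk0] at this
    linarith [this]
  -- symmetry  Q(-1-n) = Q(n)
  have hsymm : ∀ n : ℕ, Q.eval (-1 - (n : ℚ)) = Q.eval (n : ℚ) := by
    intro n
    induction n with
    | zero => simpa [hQm1] using hQ0.symm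
    | succ n ih =>
      have h1 := hrec (-2 - (n : ℚ))
      have h2 := hrec (n : ℚ)
      have e1 : (-2 - (n : ℚ) + 1) = -1 - (n : ℚ) := by ring
      have hneg : (-1 - (n : ℚ)) ^ k = -(((n : ℚ) + 1) ^ k) := by
        rw [show (-1 - (n : ℚ)) = -((n : ℚ) + 1) by ring, hodd.neg_pow]
      have e2 : (-2 - (n : ℚ)) = -1 - ((n : ℚ) + 1) := by ring
      rw [e1, hneg, e2] at h1
      push_cast
      linarith [h1, h2, ih]
  -- the symmetry as a polynomial identity
  have hcomp : Q.comp (-X - 1) = Q := by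
    have : Q.comp (-X - 1) - Q = 0 := by
      apply aux_zero
      intro n
      have := hsymm n
      simp only [eval_sub, eval_comp, eval_neg, eval_X, eval_one]
      rw [show -(n : ℚ) - 1 = -1 - (n : ℚ) by ring, this, sub_self]
    exact sub_eq_zero.mp this
  -- derivative vanishes at 0 (coefficient of X is B'_k = 0)
  have hd0 : Q.derivative.eval 0 = 0 := by
    rw [← coeff_zero_eq_eval_zero, coeff_derivative]
    have hc : Q.coeff 1 = 0 := by
      rw [hQ, coeff_C_mul, finset_sum_coeff]
      have : ∀ j ∈ Finset.range (k + 1),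
          (C ((Nat.choose (k + 1) j : ℚ) * bernoulli' j) * X ^ (k + 1 - j)).coeff 1 = 0 := by
        intro j hj
        rw [coeff_C_mul, coeff_X_pow]
        by_cases h : (1 : ℕ) = k + 1 - j
        · have hjk : j = k := by
            have := Finset.mem_range.mp hj; omega
          subst hjk
          rw [bernoulli'_eq_zero_of_odd hodd (by omega)]
          simp
        · simp [h]
      rw [Finset.sum_eq_zero this, mul_zero]
    simp [hc]
  -- derivative vanishes at -1 by symmetry
  have hdm1 : Q.derivative.eval (-1) = 0 := by
    have hder := congrArg derivative hcomp
    rw [derivative_comp] at hder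
    have := congrArg (eval 0) hder
    simp only [derivative_sub, derivative_neg, derivative_X, derivative_one, sub_zero,
      eval_mul, eval_comp, eval_neg, eval_sub, eval_X, eval_one] at this
    rw [hd0] at this
    have h0 : -(0:ℚ) - 1 = -1 := by ring
    rw [h0] at this
    linarith [this]
  -- assemble divisibility
  have hX : (X : ℚ[X]) ^ 2 ∣ Q := by
    have := aux_sq_dvd Q 0 hQ0 hd0
    simpa using this
  have hX1 : ((X : ℚ[X]) + 1) ^ 2 ∣ Q := by
    have := aux_sq_dvd Q (-1) hQm1 hdm1
    simpa [sub_neg_eq_add] using this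
  have hco : IsCoprime ((X : ℚ[X]) ^ 2) ((X + 1) ^ 2) := by
    have : IsCoprime (X : ℚ[X]) (X + 1) := ⟨-1, 1, by ring⟩
    exact this.pow
  exact hco.mul_dvd hX hX1
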